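/- Define v_n = log|B_{2n}| where B_{2n} is the 2n-th Bernoulli number. Then for all n ≥ 4, the second difference v_{n+2}/(n+2) - 2v_{n+1}/(n+1) + v_n/n is negative. -/

import Mathlib

open Real

/-- `v n = log |B_{2n}|`, with `B_k` the Bernoulli numbers. -/
noncomputable def vBern (n : ℕ) : ℝ := Real.log |((bernoulli (2 * n) : ℚ) : ℝ)|

namespace BernAux

noncomputable def Z (m : ℕ) : ℝ := ∑' k : ℕ, 1 / (k : ℝ) ^ (2 * m)

lemma summableZ {m : ℕ} (hm : 1 ≤ m) :
    Summable (fun k : ℕ => 1 / (k : ℝ) ^ (2 * m)) :=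
  summable_one_div_nat_pow.mpr (by omega)

lemma hasSumZ {m : ℕ} (hm : 1 ≤ m) :
    HasSum (fun k : ℕ => 1 / (k : ℝ) ^ (2 * m)) (Z m) :=
  (summableZ hm).hasSum

lemma one_le_Z {m : ℕ} (hm : 1 ≤ m) : 1 ≤ Z m := by
  have h := Summable.le_tsum (summableZ hm) 1 (fun j _ => by positivity)
  unfold Z
  simpa using h

lemma Z_pos {m : ℕ} (hm : 1 ≤ m) : 0 < Z m := lt_of_lt_of_le one_pos (one_le_Z hm)

lemma summable_shift {m : ℕ} (hm : 1 ≤ m) :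
    Summable (fun k : ℕ => 1 / ((k : ℝ) + 1) ^ (2 * m)) := by
  have h := (summable_nat_add_iff (f := fun k : ℕ => 1 / (k : ℝ) ^ (2 * m)) 1).mpr (summableZ hm)
  refine h.congr fun k => ?_
  push_cast
  ring_nf

lemma summable_shift2 {m : ℕ} (hm : 1 ≤ m) :
    Summable (fun k : ℕ => 1 / ((k : ℝ) + 2) ^ (2 * m)) := by
  have h := (summable_nat_add_iff (f := fun k : ℕ => 1 / ((k : ℝ) + 1) ^ (2 * m)) 1).mpr
    (summable_shift hm)
  refine h.congr fun k => ?_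
  push_cast
  ring_nf

lemma Z_tail {m : ℕ} (hm : 1 ≤ m) :
    Z m = 1 + ∑' k : ℕ, 1 / ((k : ℝ) + 2) ^ (2 * m) := by
  have h2m : 2 * m ≠ 0 := by omega
  have e1 : Z m = 1 / (0 : ℝ) ^ (2 * m) + ∑' k : ℕ, 1 / ((k : ℝ) + 1) ^ (2 * m) := by
    rw [Z, Summable.tsum_eq_zero_add (summableZ hm)]
    norm_num
  rw [e1, Summable.tsum_eq_zero_add (summable_shift hm), zero_pow h2m]
  norm_num
  exact tsum_congr fun k => by push_cast; ring_nf

lemma Z_one : Z 1 = π ^ 2 / 6 := by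
  rw [Z]
  rw [show 2 * 1 = 2 by norm_num]
  exact hasSum_zeta_two.tsum_eq

lemma Z_le {m : ℕ} (hm : 1 ≤ m) : Z m ≤ 1 + (13 / 5) / 4 ^ m := by
  obtain ⟨j, rfl⟩ : ∃ j, m = j + 1 := ⟨m - 1, by omega⟩
  have htail : (∑' k : ℕ, 1 / ((k : ℝ) + 2) ^ (2 * (j + 1)))
      ≤ ∑' k : ℕ, (1 / 4 ^ j) * (1 / ((k : ℝ) + 2) ^ (2 * 1)) := by
    refine Summable.tsum_le_tsum (fun k => ?_) (summable_shift2 hm)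
      ((summable_shift2 (le_refl 1)).mul_left _)
    have hx0 : (0 : ℝ) < (k : ℝ) + 2 := by positivity
    have h4 : (4 : ℝ) ^ j ≤ (((k : ℝ) + 2) ^ 2) ^ j := by
      refine pow_le_pow_left₀ (by norm_num) ?_ j
      nlinarith [Nat.cast_nonneg (α := ℝ) k]
    rw [div_mul_div_comm, one_mul, div_le_div_iff₀ (by positivity) (by positivity)]
    have he : ((k : ℝ) + 2) ^ (2 * (j + 1)) = (((k : ℝ) + 2) ^ 2) ^ j * ((k : ℝ) + 2) ^ (2 * 1) := by
      rw [← pow_mul, ← pow_add]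
      ring_nf
    rw [he]
    nlinarith [pow_pos (show (0:ℝ) < ((k : ℝ) + 2) ^ 2 by positivity) j,
      pow_pos hx0 (2 * 1), mul_le_mul_of_nonneg_right h4 (le_of_lt (pow_pos hx0 (2 * 1)))]
  have hsum : (∑' k : ℕ, (1 / 4 ^ j) * (1 / ((k : ℝ) + 2) ^ (2 * 1)))
      = (1 / 4 ^ j) * (Z 1 - 1) := by
    rw [tsum_mul_left]
    congr 1
    have := Z_tail (le_refl 1)
    linarith [this]
  have hpi : Z 1 - 1 ≤ 13 / 20 := by
    rw [Z_one]
    nlinarith [pi_lt_d4, pi_pos]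
  have h4pos : (0 : ℝ) < 4 ^ j := by positivity
  have hZt := Z_tail hm
  have hfin : (1 / (4:ℝ) ^ j) * (Z 1 - 1) ≤ (13 / 5) / 4 ^ (j + 1) := by
    have h1 : (1 / (4:ℝ) ^ j) * (Z 1 - 1) ≤ (1 / (4:ℝ) ^ j) * (13 / 20) :=
      mul_le_mul_of_nonneg_left hpi (by positivity)
    have h2 : (1 / (4:ℝ) ^ j) * (13 / 20) = (13 / 5) / 4 ^ (j + 1) := by
      rw [pow_succ]
      field_simp
      ring
    linarith
  calc Z (j + 1) = 1 + ∑' k : ℕ, 1 / ((k : ℝ) + 2) ^ (2 * (j + 1)) := hZt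
    _ ≤ 1 + (1 / 4 ^ j) * (Z 1 - 1) := by rw [← hsum]; linarith [htail]
    _ ≤ 1 + (13 / 5) / 4 ^ (j + 1) := by linarith [hfin]

lemma logZ_nonneg {m : ℕ} (hm : 1 ≤ m) : 0 ≤ Real.log (Z m) :=
  Real.log_nonneg (one_le_Z hm)

lemma logZ_le {m : ℕ} (hm : 1 ≤ m) : Real.log (Z m) ≤ (13 / 5) / 4 ^ m := by
  have h := Real.log_le_sub_one_of_pos (Z_pos hm)
  linarith [Z_le hm]

lemma vBern_eq {m : ℕ} (hm : 1 ≤ m) :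
    vBern m = Real.log (Z m) + Real.log (Nat.factorial (2 * m) : ℝ) + Real.log 2
      - 2 * (m : ℝ) * Real.log (2 * π) := by
  have hm0 : m ≠ 0 := by omega
  have h := (hasSum_zeta_nat hm0).tsum_eq
  have hZeq : Z m = (-1 : ℝ) ^ (m + 1) * 2 ^ (2 * m - 1) * π ^ (2 * m) *
      ((bernoulli (2 * m) : ℚ) : ℝ) / (Nat.factorial (2 * m) : ℝ) := h
  have hfpos : (0 : ℝ) < (Nat.factorial (2 * m) : ℝ) := by exact_mod_cast Nat.factorial_pos (2 * m)
  have hcpos : (0 : ℝ) < (2 : ℝ) ^ (2 * m - 1) * π ^ (2 * m) := by positivity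
  have hspos : ((-1 : ℝ) ^ (m + 1)) ≠ 0 := by
    intro hcon
    have := pow_eq_zero_iff (n := m + 1) (by omega) |>.mp hcon
    norm_num at this
  have hB : ((bernoulli (2 * m) : ℚ) : ℝ)
      = Z m * (Nat.factorial (2 * m) : ℝ) / ((-1 : ℝ) ^ (m + 1) * (2 ^ (2 * m - 1) * π ^ (2 * m))) := by
    rcases Nat.even_or_odd (m + 1) with hpar | hpar
    · rw [hpar.neg_one_pow] at hZeq ⊢
      field_simp at hZeq ⊢
      linear_combination -hZeq
    · rw [hpar.neg_one_pow] at hZeq ⊢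
      field_simp at hZeq ⊢
      linear_combination hZeq
  have habs : |((bernoulli (2 * m) : ℚ) : ℝ)|
      = Z m * (Nat.factorial (2 * m) : ℝ) / (2 ^ (2 * m - 1) * π ^ (2 * m)) := by
    rw [hB, abs_div, abs_mul, abs_mul, abs_pow, abs_neg, abs_one, one_pow, one_mul,
      abs_of_pos (Z_pos hm), abs_of_pos hfpos,
      abs_of_pos hcpos]
  have hZne : Z m ≠ 0 := (Z_pos hm).ne'
  unfold vBern
  rw [habs, Real.log_div (by positivity) (by positivity),
    Real.log_mul hZne hfpos.ne',
    Real.log_mul (by positivity) (by positivity),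
    Real.log_pow, Real.log_pow, Real.log_mul two_ne_zero pi_ne_zero]
  have hcast : ((2 * m - 1 : ℕ) : ℝ) = 2 * (m : ℝ) - 1 := by
    have : 1 ≤ 2 * m := by omega
    push_cast [Nat.cast_sub this]
    ring
  rw [hcast]
  push_cast
  ring

lemma fact_succ_log (k : ℕ) :
    Real.log (Nat.factorial (k + 1) : ℝ) = Real.log ((k : ℝ) + 1) + Real.log (Nat.factorial k : ℝ) := by
  have hk : (Nat.factorial k : ℝ) ≠ 0 := by
    exact_mod_cast (Nat.factorial_pos k).ne'
  rw [Nat.factorial_succ]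
  push_cast
  rw [Real.log_mul (by positivity) hk]

lemma log_factorial_le {m : ℕ} (hm : 1 ≤ m) :
    Real.log (Nat.factorial m : ℝ) ≤ ((m : ℝ) + 1) * Real.log m - ((m : ℝ) - 1) := by
  induction m, hm using Nat.le_induction with
  | base => simp [Nat.factorial]
  | succ m hm ih =>
    have hm0 : (0 : ℝ) < (m : ℝ) := by exact_mod_cast hm
    have hgap : 1 / ((m : ℝ) + 1) ≤ Real.log ((m : ℝ) + 1) - Real.log m := by
      have h := Real.log_le_sub_one_of_pos (show (0 : ℝ) < (m : ℝ) / ((m : ℝ) + 1) by positivity)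
      rw [Real.log_div hm0.ne' (by positivity)] at h
      have he : (m : ℝ) / ((m : ℝ) + 1) - 1 = -(1 / ((m : ℝ) + 1)) := by field_simp; ring
      rw [he] at h
      linarith
    have h1 : 1 ≤ ((m : ℝ) + 1) * (Real.log ((m : ℝ) + 1) - Real.log m) := by
      have h2 := mul_le_mul_of_nonneg_left hgap (show (0:ℝ) ≤ (m : ℝ) + 1 by positivity)
      have he : ((m : ℝ) + 1) * (1 / ((m : ℝ) + 1)) = 1 := by field_simp
      linarith [he ▸ h2]
    have hf := fact_succ_log m
    push_cast at hf ⊢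
    rw [hf]
    nlinarith [ih, h1]

lemma log_add_le {x δ : ℝ} (hx : 0 < x) (hδ : 0 ≤ δ) :
    Real.log (x + δ) ≤ Real.log x + δ / x := by
  have h := Real.log_le_sub_one_of_pos (show 0 < (x + δ) / x by positivity)
  rw [Real.log_div (by positivity) hx.ne'] at h
  have he : (x + δ) / x - 1 = δ / x := by field_simp; ring
  rw [he] at h
  linarith

lemma log_le_aux {k : ℕ} (hk : 4 ≤ k) : Real.log (4 * (k : ℝ) + 4) ≤ (k : ℝ) - 1 := by
  induction k, hk using Nat.le_induction with
  | base =>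
    have h20 : (4 : ℝ) * ((4 : ℕ) : ℝ) + 4 = 20 := by norm_num
    rw [h20, Real.log_le_iff_le_exp (by norm_num)]
    have he : Real.exp (((4 : ℕ) : ℝ) - 1) = Real.exp 1 * Real.exp 1 * Real.exp 1 := by
      rw [← Real.exp_add, ← Real.exp_add]
      norm_num
    rw [he]
    nlinarith [Real.exp_one_gt_d9, Real.exp_pos 1]
  | succ k hk ih =>
    have hk4 : (4 : ℝ) ≤ (k : ℝ) := by exact_mod_cast hk
    have hk0 : (0 : ℝ) < 4 * (k : ℝ) + 4 := by linarith
    have h := log_add_le hk0 (show (0:ℝ) ≤ 4 by norm_num)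
    have hdiv : 4 / (4 * (k : ℝ) + 4) ≤ 1 := by
      rw [div_le_one hk0]; linarith
    have he : 4 * (((k : ℕ) : ℝ) + 1) + 4 = (4 * (k : ℝ) + 4) + 4 := by ring
    push_cast
    push_cast at ih
    rw [he]
    linarith

lemma nat_bound {k : ℕ} (hk : 4 ≤ k) : 104 * (k + 1) * (k + 2) ≤ 15 * 4 ^ k := by
  induction k, hk using Nat.le_induction with
  | base => norm_num
  | succ k hk ih =>
    have h1 : 104 * (k + 1 + 1) * (k + 1 + 2) ≤ 4 * (104 * (k + 1) * (k + 2)) := by nlinarith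
    calc 104 * (k + 1 + 1) * (k + 1 + 2) ≤ 4 * (104 * (k + 1) * (k + 2)) := h1
      _ ≤ 4 * (15 * 4 ^ k) := Nat.mul_le_mul_left 4 ih
      _ = 15 * 4 ^ (k + 1) := by ring

end BernAux

set_option maxHeartbeats 1000000 in
open BernAux in
theorem bernoulli_second_diff_neg (n : ℕ) (hn : 4 ≤ n) :
    vBern (n + 2) / ((n : ℝ) + 2) - 2 * vBern (n + 1) / ((n : ℝ) + 1) + vBern n / n < 0 := by
  have hN : (4 : ℝ) ≤ (n : ℝ) := by exact_mod_cast hn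
  have hN0 : (0 : ℝ) < (n : ℝ) := by linarith
  set N : ℝ := (n : ℝ) with hNdef
  -- factorial log relations
  have hf2 : Real.log (Nat.factorial (2 * (n + 2)) : ℝ)
      = Real.log (Nat.factorial (2 * (n + 1)) : ℝ) + Real.log (2 * N + 3) + Real.log (2 * N + 4) := by
    have e1 : 2 * (n + 2) = (2 * n + 3) + 1 := by ring
    have e2 : 2 * n + 3 = (2 * n + 2) + 1 := by ring
    have e3 : 2 * (n + 1) = 2 * n + 2 := by ring
    rw [e1, fact_succ_log, e2, fact_succ_log, e3]
    push_cast
    rw [hNdef]; ring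
  have hf0 : Real.log (Nat.factorial (2 * n) : ℝ)
      = Real.log (Nat.factorial (2 * (n + 1)) : ℝ) - Real.log (2 * N + 1) - Real.log (2 * N + 2) := by
    have e1 : 2 * (n + 1) = (2 * n + 1) + 1 := by ring
    have e2 : 2 * n + 1 = (2 * n) + 1 := by ring
    rw [e1, fact_succ_log, e2, fact_succ_log]
    push_cast
    rw [hNdef]; ring
  -- vBern formulas
  have hv0 : vBern n = Real.log (Z n) + (Real.log (Nat.factorial (2 * (n + 1)) : ℝ)
      - Real.log (2 * N + 1) - Real.log (2 * N + 2)) + Real.log 2 - 2 * N * Real.log (2 * π) := by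
    rw [vBern_eq (by omega), hf0]
  have hv1 : vBern (n + 1) = Real.log (Z (n + 1)) + Real.log (Nat.factorial (2 * (n + 1)) : ℝ)
      + Real.log 2 - (2 * N + 2) * Real.log (2 * π) := by
    rw [vBern_eq (by omega)]
    push_cast
    ring
  have hv2 : vBern (n + 2) = Real.log (Z (n + 2)) + (Real.log (Nat.factorial (2 * (n + 1)) : ℝ)
      + Real.log (2 * N + 3) + Real.log (2 * N + 4)) + Real.log 2
      - (2 * N + 4) * Real.log (2 * π) := by
    rw [vBern_eq (by omega), hf2]
    push_cast
    ring
  -- gap bounds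
  have hg1 : (Real.log (2 * N + 3) - Real.log (2 * N + 1)) * N ≤ 1 := by
    have h := log_add_le (show (0:ℝ) < 2 * N + 1 by linarith) (show (0:ℝ) ≤ 2 by norm_num)
    have he : 2 * N + 1 + 2 = 2 * N + 3 := by ring
    rw [he] at h
    have h2 : 2 / (2 * N + 1) ≤ 1 / N := by
      rw [div_le_div_iff₀ (by linarith) hN0]
      linarith
    rw [← le_div_iff₀ hN0]
    linarith
  have hg2 : (Real.log (2 * N + 4) - Real.log (2 * N + 2)) * (N + 1) ≤ 1 := by
    have h := log_add_le (show (0:ℝ) < 2 * N + 2 by linarith) (show (0:ℝ) ≤ 2 by norm_num)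
    have he : 2 * N + 2 + 2 = 2 * N + 4 := by ring
    rw [he] at h
    have h2 : 2 / (2 * N + 2) = 1 / (N + 1) := by
      rw [div_eq_div_iff (by linarith) (by linarith)]
      ring
    rw [← le_div_iff₀ (show (0:ℝ) < N + 1 by linarith)]
    linarith
  have hg3 : (Real.log (2 * N + 2) - Real.log (2 * N + 1)) * (2 * N) ≤ 1 := by
    have h := log_add_le (show (0:ℝ) < 2 * N + 1 by linarith) (show (0:ℝ) ≤ 1 by norm_num)
    have he : 2 * N + 1 + 1 = 2 * N + 2 := by ring
    rw [he] at h
    have h2 : 1 / (2 * N + 1) ≤ 1 / (2 * N) := by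
      rw [div_le_div_iff₀ (by linarith) (by linarith)]
      linarith
    rw [← le_div_iff₀ (show (0:ℝ) < 2 * N by linarith)]
    linarith
  -- factorial upper bound
  have hg4 : Real.log (Nat.factorial (2 * (n + 1)) : ℝ) ≤ (2 * N + 3) * Real.log (2 * N + 2) - (2 * N + 1) := by
    have h := log_factorial_le (m := 2 * n + 2) (by omega)
    have e3 : 2 * (n + 1) = 2 * n + 2 := by ring
    have hc : ((2 * n + 2 : ℕ) : ℝ) = 2 * N + 2 := by push_cast; ring
    rw [e3]
    rw [hc] at h
    linarith
  -- log(2N+2) ≤ N - 1 - log 2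
  have hg5 : Real.log (2 * N + 2) ≤ N - 1 - Real.log 2 := by
    have h := log_le_aux hn
    have he : 4 * N + 4 = 2 * (2 * N + 2) := by ring
    rw [he, Real.log_mul two_ne_zero (by linarith : 2 * N + 2 ≠ 0)] at h
    linarith
  -- zeta log bounds
  have hl1 : 0 ≤ Real.log (Z (n + 1)) := logZ_nonneg (by omega)
  have hl0u : Real.log (Z n) ≤ (13 / 5) / 4 ^ n := logZ_le (by omega)
  have hl2u : Real.log (Z (n + 2)) ≤ (13 / 5) / 4 ^ n := by
    have h := logZ_le (m := n + 2) (by omega)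
    have h2 : (13 / 5 : ℝ) / 4 ^ (n + 2) ≤ (13 / 5) / 4 ^ n := by
      apply div_le_div_of_nonneg_left (by norm_num) (by positivity)
      exact pow_le_pow_right₀ (by norm_num) (by omega)
    linarith
  have hl0 : 0 ≤ Real.log (Z n) := logZ_nonneg (by omega)
  have hl2 : 0 ≤ Real.log (Z (n + 2)) := logZ_nonneg (by omega)
  have h6 : N * (N + 1) * Real.log (Z (n + 2)) + (N + 1) * (N + 2) * Real.log (Z n)
      ≤ 3 / 4 := by
    have hcast : 104 * (N + 1) * (N + 2) ≤ 15 * 4 ^ n := by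
      have := nat_bound hn
      have h' : ((104 * (n + 1) * (n + 2) : ℕ) : ℝ) ≤ ((15 * 4 ^ n : ℕ) : ℝ) := by
        exact_mod_cast this
      push_cast at h'
      linarith
    have h4p : (0 : ℝ) < 4 ^ n := by positivity
    have ha : N * (N + 1) * Real.log (Z (n + 2)) ≤ (N + 1) * (N + 2) * ((13 / 5) / 4 ^ n) := by
      have hmono : N * (N + 1) ≤ (N + 1) * (N + 2) := by nlinarith
      nlinarith [mul_le_mul_of_nonneg_left hl2u (show (0:ℝ) ≤ N * (N + 1) by nlinarith),
        mul_le_mul_of_nonneg_right hmono hl2]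
    have hb : (N + 1) * (N + 2) * Real.log (Z n) ≤ (N + 1) * (N + 2) * ((13 / 5) / 4 ^ n) :=
      mul_le_mul_of_nonneg_left hl0u (by nlinarith)
    have hc : 2 * ((N + 1) * (N + 2) * ((13 / 5) / 4 ^ n)) ≤ 3 / 4 := by
      rw [show (N + 1) * (N + 2) * ((13 / 5) / 4 ^ n) = ((13/5) * ((N+1)*(N+2))) / 4 ^ n by ring,
        show (2 : ℝ) * (((13/5) * ((N+1)*(N+2))) / 4 ^ n) = ((26/5) * ((N+1)*(N+2))) / 4 ^ n by ring,
        div_le_iff₀ h4p]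
      linarith
    linarith
  -- the key multiplied inequality
  have key : N * ((N * (N + 1)) * vBern (n + 2) - (2 * N * (N + 2)) * vBern (n + 1)
      + ((N + 1) * (N + 2)) * vBern n) < 0 := by
    rw [hv0, hv1, hv2]
    have h1 := mul_le_mul_of_nonneg_right hg1 (show (0:ℝ) ≤ N * (N + 1) by nlinarith)
    have h2 := mul_le_mul_of_nonneg_right hg2 (show (0:ℝ) ≤ N * N by nlinarith)
    have h3 := mul_le_mul_of_nonneg_right hg3 (show (0:ℝ) ≤ N + 1 by linarith)
    have h4 := mul_le_mul_of_nonneg_left hg4 (show (0:ℝ) ≤ 2 * N by linarith)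
    have h5 := mul_le_mul_of_nonneg_left hg5 (show (0:ℝ) ≤ 2 * N by linarith)
    have h6' := mul_le_mul_of_nonneg_left h6 (show (0:ℝ) ≤ N by linarith)
    have h7 : 0 ≤ (2 * N ^ 2 * (N + 2)) * Real.log (Z (n + 1)) := by
      apply mul_nonneg _ hl1
      nlinarith
    linarith [h1, h2, h3, h4, h5, h6', h7, hN]
  have hden : (0 : ℝ) < N * (N * (N + 1) * (N + 2)) :=
    mul_pos hN0 (mul_pos (mul_pos hN0 (by linarith)) (by linarith))
  have heq : vBern (n + 2) / (N + 2) - 2 * vBern (n + 1) / (N + 1) + vBern n / N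
      = (N * ((N * (N + 1)) * vBern (n + 2) - (2 * N * (N + 2)) * vBern (n + 1)
        + ((N + 1) * (N + 2)) * vBern n)) / (N * (N * (N + 1) * (N + 2))) := by
    field_simp
  rw [heq]
  exact div_neg_of_neg_of_pos key hden
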